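/- Let μ be a probability measure on ℝ with reciprocal Cauchy transform F_μ(z) = z - K(z) where K(z) = -e^{iπρα} z^{1-α} (principal branch on ℂ⁺), for α ∈ (0,1) and ρ ∈ [0,1]. Then μ is supported on [0,∞) if and only if ρ = 1. -/

import Mathlib

set_option maxHeartbeats 1000000
open Complex Real MeasureTheory Set

lemma aux_ne (z : ℂ) (hz : 0 < z.im) (x : ℝ) : z - (x : ℂ) ≠ 0 := by
  intro h
  have : (z - (x:ℂ)).im = 0 := by rw [h]; simp
  simp at this
  exact hz.ne' this

lemma aux_integrable (μ : Measure ℝ) [IsProbabilityMeasure μ] {z : ℂ} (hz : 0 < z.im) :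
    Integrable (fun x : ℝ => (z - (x:ℂ))⁻¹) μ := by
  refine (integrable_const (z.im⁻¹ : ℝ)).mono' ?_ ?_
  · exact ((continuous_const.sub Complex.continuous_ofReal).inv₀
      (fun x => aux_ne z hz x)).aestronglyMeasurable
  · refine Filter.Eventually.of_forall fun x => ?_
    rw [norm_inv]
    have h1 : z.im ≤ ‖z - (x:ℂ)‖ := by
      calc z.im = |(z - (x:ℂ)).im| := by simp [abs_of_pos hz]
      _ ≤ ‖z - (x:ℂ)‖ := Complex.abs_im_le_norm _
    exact inv_anti₀ hz h1

lemma key_estimate (α a b : ℝ) (hα : 0 < α) (hα' : α < 1) (hb : b < 0)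
    (ε x : ℝ) (hε : 0 < ε) (hε1 : ε ≤ 1) (hax : a ≤ x) (hxb : x ≤ b) :
    ((x:ℂ) + ε*I + Complex.exp ((π*α)*I) * ((x:ℂ)+ε*I) ^ ((1:ℂ)-(α:ℂ))).re ≤ b ∧
    ε ≤ ((x:ℂ) + ε*I + Complex.exp ((π*α)*I) * ((x:ℂ)+ε*I) ^ ((1:ℂ)-(α:ℂ))).im ∧
    ((x:ℂ) + ε*I + Complex.exp ((π*α)*I) * ((x:ℂ)+ε*I) ^ ((1:ℂ)-(α:ℂ))).im
      ≤ ε * (1 + π/2 * (1 - a) ^ (1-α) / (-b)) := by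
  set w : ℂ := (x:ℂ) + ε*I with hw
  have hwre : w.re = x := by simp [hw]
  have hwim : w.im = ε := by simp [hw]
  have hx0 : x < 0 := lt_of_le_of_lt hxb hb
  have hw0 : w ≠ 0 := by
    intro h; rw [h] at hwim; simp at hwim; exact hε.ne' hwim.symm
  have habs0 : 0 < ‖w‖ := norm_pos_iff.mpr hw0
  set θ := Complex.arg w with hθ
  have hsinθ : Real.sin θ = ε / ‖w‖ := by
    rw [hθ, Complex.sin_arg, hwim]
  have hcosθ : Real.cos θ = x / ‖w‖ := by
    rw [hθ, Complex.cos_arg hw0, hwre]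
  have hθle : θ ≤ π := Complex.arg_le_pi w
  have hθpos : 0 < θ := by
    by_contra h
    push_neg at h
    have h2 : -π < θ := Complex.neg_pi_lt_arg w
    have : Real.sin θ ≤ 0 := by
      have := Real.sin_nonneg_of_nonneg_of_le_pi (x := -θ) (by linarith) (by linarith)
      rw [Real.sin_neg] at this; linarith
    rw [hsinθ] at this
    have : (0:ℝ) < ε / ‖w‖ := by positivity
    linarith
  have hθge : π/2 < θ := by
    by_contra h
    push_neg at h
    have : 0 ≤ Real.cos θ := Real.cos_nonneg_of_mem_Icc ⟨by linarith, h⟩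
    rw [hcosθ] at this
    have : x / ‖w‖ < 0 := div_neg_of_neg_of_pos hx0 habs0
    linarith
  -- |w| bounds
  have habsge : -b ≤ ‖w‖ := by
    have h1 : |w.re| ≤ ‖w‖ := Complex.abs_re_le_norm w
    rw [hwre, abs_of_neg hx0] at h1
    linarith
  have habs : ‖w‖ ≤ 1 - a := by
    calc ‖w‖ ≤ ‖(x:ℂ)‖ + ‖(ε:ℂ)*I‖ := by
          rw [hw]; exact norm_add_le _ _
    _ = |x| + ε := by simp [abs_of_pos hε]
    _ ≤ -a + 1 := by
        have h : |x| = -x := abs_of_neg hx0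
        rw [h]; linarith
    _ = 1 - a := by ring
  -- Jordan: π - θ ≤ (π/2) ε / (-b)
  have hπθ : π - θ ≤ π/2 * (ε / (-b)) := by
    have hu0 : 0 ≤ π - θ := by linarith
    have hu1 : π - θ ≤ π/2 := by linarith
    have hj := Real.mul_le_sin hu0 hu1
    rw [Real.sin_pi_sub, hsinθ] at hj
    have h2 : ε / ‖w‖ ≤ ε / (-b) :=
      div_le_div_of_nonneg_left hε.le (by linarith) habsge
    have hπ := Real.pi_pos
    have h3 : 2/π * (π - θ) ≤ ε / (-b) := le_trans hj h2
    calc π - θ = π/2 * (2/π * (π - θ)) := by field_simp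
    _ ≤ π/2 * (ε / (-b)) := by
        apply mul_le_mul_of_nonneg_left h3 (by positivity)
  -- rewrite the cpow term
  have hcpow : Complex.exp ((π*α)*I) * w ^ ((1:ℂ)-(α:ℂ))
      = Complex.exp ((π*α)*I + ((1:ℂ)-(α:ℂ)) * Complex.log w) := by
    rw [Complex.cpow_def_of_ne_zero hw0, ← Complex.exp_add]
    congr 1; ring
  set v : ℂ := (π*α)*I + ((1:ℂ)-(α:ℂ)) * Complex.log w with hv
  have hvre : v.re = (1-α) * Real.log (‖w‖) := by
    simp [hv, Complex.log_re, Complex.log_im]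
  have hvim : v.im = π*α + (1-α) * θ := by
    simp [hv, Complex.log_re, Complex.log_im, hθ]
  set r : ℝ := Real.exp ((1-α) * Real.log (‖w‖)) with hr
  set φ : ℝ := π*α + (1-α)*θ with hφ
  have hre : (Complex.exp v).re = r * Real.cos φ := by
    rw [Complex.exp_re, hvre, hvim]
  have him : (Complex.exp v).im = r * Real.sin φ := by
    rw [Complex.exp_im, hvre, hvim]
  have hr0 : 0 < r := Real.exp_pos _
  have hrle : r ≤ (1 - a) ^ (1-α) := by
    rw [hr, mul_comm, ← Real.rpow_def_of_pos habs0]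
    exact Real.rpow_le_rpow habs0.le habs (by linarith)
  have hπ := Real.pi_pos
  have hφle : φ ≤ π := by rw [hφ]; nlinarith
  have hφge : π/2 ≤ φ := by rw [hφ]; nlinarith
  have hcos : Real.cos φ ≤ 0 :=
    Real.cos_nonpos_of_pi_div_two_le_of_le hφge (by linarith)
  have hsin0 : 0 ≤ Real.sin φ :=
    Real.sin_nonneg_of_nonneg_of_le_pi (le_trans (by positivity) hφge) hφle
  have hsinle : Real.sin φ ≤ (1-α) * (π - θ) := by
    have h1 : Real.sin φ = Real.sin (π - φ) := (Real.sin_pi_sub φ).symm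
    have h2 : π - φ = (1-α)*(π - θ) := by rw [hφ]; ring
    rw [h1, h2]
    exact Real.sin_le (by nlinarith)
  refine ⟨?_, ?_, ?_⟩
  · rw [Complex.add_re, hcpow, hre, hwre]
    have : r * Real.cos φ ≤ 0 := mul_nonpos_of_nonneg_of_nonpos hr0.le hcos
    linarith
  · rw [Complex.add_im, hcpow, him, hwim]
    have : 0 ≤ r * Real.sin φ := mul_nonneg hr0.le hsin0
    linarith
  · rw [Complex.add_im, hcpow, him, hwim]
    have h3 : (0:ℝ) ≤ (1-a)^(1-α) := Real.rpow_nonneg (by linarith) _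
    have h1 : r * Real.sin φ ≤ (1-a)^(1-α) * (π - θ) := by
      calc r * Real.sin φ ≤ (1-a)^(1-α) * Real.sin φ :=
            mul_le_mul_of_nonneg_right hrle hsin0
      _ ≤ (1-a)^(1-α) * ((1-α) * (π - θ)) :=
            mul_le_mul_of_nonneg_left hsinle h3
      _ ≤ (1-a)^(1-α) * (π - θ) := by
            apply mul_le_mul_of_nonneg_left ?_ h3
            nlinarith
    have h4 : (1-a)^(1-α) * (π - θ) ≤ (1-a)^(1-α) * (π/2 * (ε / (-b))) :=
      mul_le_mul_of_nonneg_left hπθ h3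
    have h5 : (1-a)^(1-α) * (π/2 * (ε / (-b))) = ε * (π/2 * (1-a)^(1-α) / (-b)) := by
      field_simp
    have h6 : r * Real.sin φ ≤ ε * (π/2 * (1-a)^(1-α) / (-b)) := by
      rw [← h5]; exact h1.trans h4
    nlinarith

lemma poisson_cont (ε : ℝ) (hε : 0 < ε) :
    Continuous (fun p : ℝ × ℝ => ε / ((p.1 - p.2)^2 + ε^2)) := by
  apply continuous_const.div
  · fun_prop
  · intro p
    positivity

lemma inner_integral (a b s ε : ℝ) (hab : a ≤ b) (hε : 0 < ε) :
    ∫ x in Set.Ioc a b, ε / ((x - s)^2 + ε^2)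
      = Real.arctan ((b-s)/ε) - Real.arctan ((a-s)/ε) := by
  rw [← intervalIntegral.integral_of_le hab]
  have hderiv : ∀ x ∈ Set.uIcc a b,
      HasDerivAt (fun y => Real.arctan ((y - s)/ε)) (ε / ((x - s)^2 + ε^2)) x := by
    intro x _
    have h1 : HasDerivAt (fun y : ℝ => (y - s)/ε) (1/ε) x := by
      simpa using ((hasDerivAt_id x).sub_const s).div_const ε
    have h2 := (Real.hasDerivAt_arctan ((x - s)/ε)).comp x h1
    refine h2.congr_deriv ?_
    field_simp
    ring
  have hcont : IntervalIntegrable (fun x => ε / ((x - s)^2 + ε^2)) volume a b := by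
    apply Continuous.intervalIntegrable
    apply continuous_const.div
    · fun_prop
    · intro x; positivity
  simpa using intervalIntegral.integral_eq_sub_of_hasDerivAt hderiv hcont

lemma swap_lemma (μ : Measure ℝ) [IsProbabilityMeasure μ] (a b ε : ℝ) (hab : a ≤ b)
    (hε : 0 < ε) :
    ∫ s, (Real.arctan ((b-s)/ε) - Real.arctan ((a-s)/ε)) ∂μ
      = ∫ x in Set.Ioc a b, (∫ s, ε / ((x-s)^2 + ε^2) ∂μ) := by
  have hfin : IsFiniteMeasure (volume.restrict (Set.Ioc a b)) := by
    constructor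
    rw [Measure.restrict_apply_univ]
    exact measure_Ioc_lt_top
  have hint : Integrable (Function.uncurry fun x s => ε / ((x-s)^2 + ε^2))
      ((volume.restrict (Set.Ioc a b)).prod μ) := by
    refine (integrable_const (ε⁻¹)).mono' ?_ ?_
    · exact (poisson_cont ε hε).aestronglyMeasurable
    · refine Filter.Eventually.of_forall fun p => ?_
      simp only [Function.uncurry]
      rw [Real.norm_eq_abs, _root_.abs_of_nonneg (by positivity)]
      rw [div_le_iff₀ (by positivity)]
      have : ε * ε ≤ ((p.1 - p.2)^2 + ε^2) * ε⁻¹ * ε := by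
        rw [mul_assoc, inv_mul_cancel₀ hε.ne', mul_one]
        nlinarith [sq_nonneg (p.1 - p.2)]
      nlinarith [sq_nonneg (p.1 - p.2)]
  have hsw := MeasureTheory.integral_integral_swap hint
  rw [hsw]
  apply integral_congr_ae
  refine Filter.Eventually.of_forall fun s => ?_
  exact (inner_integral a b s ε hab hε).symm

lemma prod_int (μ : Measure ℝ) [IsProbabilityMeasure μ] (a b ε : ℝ) (hε : 0 < ε) :
    Integrable (Function.uncurry fun x s => ε / ((x-s)^2 + ε^2))
      ((volume.restrict (Set.Ioc a b)).prod μ) := by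
  have hfin : IsFiniteMeasure (volume.restrict (Set.Ioc a b)) := by
    constructor
    rw [Measure.restrict_apply_univ]
    exact measure_Ioc_lt_top
  refine (integrable_const (ε⁻¹)).mono' ?_ ?_
  · exact (poisson_cont ε hε).aestronglyMeasurable
  · refine Filter.Eventually.of_forall fun p => ?_
    simp only [Function.uncurry]
    rw [Real.norm_eq_abs, _root_.abs_of_nonneg (by positivity)]
    rw [div_le_iff₀ (by positivity)]
    have : ε * ε ≤ ((p.1 - p.2)^2 + ε^2) * ε⁻¹ * ε := by
      rw [mul_assoc, inv_mul_cancel₀ hε.ne', mul_one]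
      nlinarith [sq_nonneg (p.1 - p.2)]
    nlinarith [sq_nonneg (p.1 - p.2)]

lemma im_G (μ : Measure ℝ) [IsProbabilityMeasure μ] {z : ℂ} (hz : 0 < z.im) :
    (∫ x : ℝ, (z - (x:ℂ))⁻¹ ∂μ).im
      = ∫ s : ℝ, -(z.im / ((z.re - s)^2 + z.im^2)) ∂μ := by
  rw [show (∫ x : ℝ, (z - (x:ℂ))⁻¹ ∂μ).im = RCLike.im (∫ x : ℝ, (z - (x:ℂ))⁻¹ ∂μ) from rfl,
    ← integral_im (aux_integrable μ hz)]
  apply integral_congr_ae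
  refine Filter.Eventually.of_forall fun s => ?_
  have h0 : z - (s:ℂ) ≠ 0 := aux_ne z hz s
  show ((z - (s:ℂ))⁻¹).im = _
  rw [Complex.inv_im, Complex.normSq_apply]
  simp only [Complex.sub_re, Complex.ofReal_re, Complex.sub_im, Complex.ofReal_im, sub_zero]
  rw [neg_div, ← sq, ← sq]

lemma measure_Ioo_zero (α : ℝ) (hα : 0 < α) (hα' : α < 1)
    (μ : Measure ℝ) [IsProbabilityMeasure μ]
    (hF1 : ∀ z : ℂ, 0 < z.im →
      (∫ x : ℝ, (z - (x : ℂ))⁻¹ ∂μ)⁻¹ = z + Complex.exp ((π*α) * Complex.I) * z ^ ((1:ℂ) - (α:ℂ)))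
    (a b : ℝ) (hab : a < b) (hb : b < 0) : μ (Set.Ioo a b) = 0 := by
  have hfin : IsFiniteMeasure (volume.restrict (Set.Ioc a b)) := by
    constructor
    rw [Measure.restrict_apply_univ]
    exact measure_Ioc_lt_top
  set C : ℝ := 1 + π/2 * (1 - a) ^ (1-α) / (-b) with hC
  have hC0 : 0 < C := by
    have h1 : (0:ℝ) ≤ (1-a)^(1-α) := Real.rpow_nonneg (by linarith) _
    have h2 : (0:ℝ) ≤ π/2 * (1-a)^(1-α) := mul_nonneg (by positivity) h1
    have h3 : (0:ℝ) ≤ π/2 * (1-a)^(1-α) / (-b) := div_nonneg h2 (by linarith)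
    rw [hC]; linarith
  set K : ℝ := (b - a) * (C / b^2) with hK
  set e : ℕ → ℝ := fun n => 1/(n+1) with he
  have he0 : ∀ n, 0 < e n := fun n => by positivity
  have he1 : ∀ n, e n ≤ 1 := fun n => by
    rw [he]; simp only []
    rw [div_le_one (by positivity)]
    simp
  -- the inner bound
  have hinner : ∀ n, ∀ x ∈ Set.Ioc a b,
      (∫ s, e n / ((x-s)^2 + (e n)^2) ∂μ) ≤ (e n) * C / b^2 := by
    intro n x hx
    set ε := e n
    have hε : 0 < ε := he0 n
    set z : ℂ := (x:ℂ) + ε*I with hz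
    have hzim : z.im = ε := by simp [hz]
    have hzre : z.re = x := by simp [hz]
    have hzim' : 0 < z.im := by rw [hzim]; exact hε
    have hGF : (∫ t : ℝ, (z - (t:ℂ))⁻¹ ∂μ) = (z + Complex.exp ((π*α) * I) * z ^ ((1:ℂ)-(α:ℂ)))⁻¹ := by
      rw [← hF1 z hzim', inv_inv]
    have hkey := key_estimate α a b hα hα' hb ε x hε (he1 n) (le_of_lt hx.1) hx.2
    set F : ℂ := (x:ℂ) + ε*I + Complex.exp ((π*α)*I) * ((x:ℂ)+ε*I) ^ ((1:ℂ)-(α:ℂ)) with hFdef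
    have hIm : (∫ t : ℝ, (z - (t:ℂ))⁻¹ ∂μ).im = -(F.im / Complex.normSq F) := by
      rw [hGF]
      rw [Complex.inv_im]
      rw [neg_div]
    have h2 : (∫ s, -(ε / ((x-s)^2 + ε^2)) ∂μ) = -(F.im / Complex.normSq F) := by
      rw [← hIm, im_G μ hzim']
      rw [hzre, hzim]
    have h3 : (∫ s, ε / ((x-s)^2 + ε^2) ∂μ) = F.im / Complex.normSq F := by
      have h2' : -(∫ s, ε / ((x-s)^2 + ε^2) ∂μ) = -(F.im / Complex.normSq F) := by
        rw [← integral_neg]; exact h2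
      exact neg_injective h2'
    rw [h3]
    -- now bound
    have hb2 : (0:ℝ) < b^2 := by nlinarith
    have hnormSq : b^2 ≤ Complex.normSq F := by
      have h4 : F.re ≤ b := hkey.1
      have h5 : F.re^2 ≥ b^2 := by nlinarith
      rw [Complex.normSq_apply]
      nlinarith [sq_nonneg F.im, sq_nonneg F.re]
    have hnum : F.im ≤ ε * C := by
      rw [hC]; exact hkey.2.2
    have hnum0 : 0 ≤ F.im := le_trans hε.le hkey.2.1
    calc F.im / Complex.normSq F ≤ (ε * C) / b^2 := by
          apply div_le_div₀ (by positivity) hnum hb2 hnormSq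
    _ = ε * C / b^2 := by ring
  -- the integral bound
  have hbound : ∀ n, (∫ s, (Real.arctan ((b-s)/(e n)) - Real.arctan ((a-s)/(e n))) ∂μ)
      ≤ K * e n := by
    intro n
    rw [swap_lemma μ a b (e n) hab.le (he0 n)]
    have hint := (prod_int μ a b (e n) (he0 n)).integral_prod_left
    calc ∫ x in Set.Ioc a b, (∫ s, e n / ((x-s)^2 + (e n)^2) ∂μ)
        ≤ ∫ _x in Set.Ioc a b, ((e n) * C / b^2) := by
          apply setIntegral_mono_on
          · exact hint
          · exact integrable_const _
          · exact measurableSet_Ioc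
          · exact hinner n
    _ = (b - a) * ((e n) * C / b^2) := by
          rw [setIntegral_const, measureReal_def, Real.volume_Ioc, ENNReal.toReal_ofReal (by linarith)]
          simp
    _ = K * e n := by rw [hK]; ring
  -- Fatou argument
  set f : ℕ → ℝ → ℝ := fun n s => Real.arctan ((b-s)/(e n)) - Real.arctan ((a-s)/(e n))
    with hf
  have hf_cont : ∀ n, Continuous (f n) := by
    intro n
    apply Continuous.sub
    · exact Real.continuous_arctan.comp (by fun_prop)
    · exact Real.continuous_arctan.comp (by fun_prop)
  have hf_nonneg : ∀ n s, 0 ≤ f n s := by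
    intro n s
    rw [hf]
    simp only []
    rw [sub_nonneg]
    apply Real.arctan_strictMono.monotone
    apply div_le_div_of_nonneg_right (by linarith) ((he0 n).le)
  have hf_int : ∀ n, Integrable (f n) μ := by
    intro n
    refine (integrable_const π).mono' (hf_cont n).aestronglyMeasurable ?_
    refine Filter.Eventually.of_forall fun s => ?_
    rw [Real.norm_eq_abs]
    have h1 := Real.arctan_lt_pi_div_two ((b-s)/(e n))
    have h2 := Real.arctan_lt_pi_div_two ((a-s)/(e n))
    have h3 := Real.neg_pi_div_two_lt_arctan ((b-s)/(e n))
    have h4 := Real.neg_pi_div_two_lt_arctan ((a-s)/(e n))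
    rw [abs_le]
    constructor <;> [skip; skip] <;> · rw [hf]; simp only []; linarith
  have hlin : ∀ n, ∫⁻ s, ENNReal.ofReal (f n s) ∂μ = ENNReal.ofReal (∫ s, f n s ∂μ) :=
    fun n => (ofReal_integral_eq_lintegral_ofReal (hf_int n)
      (Filter.Eventually.of_forall (hf_nonneg n))).symm
  have hupper : ∀ n, ∫⁻ s, ENNReal.ofReal (f n s) ∂μ ≤ ENNReal.ofReal (K * e n) := by
    intro n
    rw [hlin n]
    exact ENNReal.ofReal_le_ofReal (hbound n)
  have htendK : Filter.Tendsto (fun n => ENNReal.ofReal (K * e n)) Filter.atTop (nhds 0) := by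
    have h1 : Filter.Tendsto (fun n : ℕ => K * e n) Filter.atTop (nhds 0) := by
      have := tendsto_one_div_add_atTop_nhds_zero_nat.const_mul K
      rwa [mul_zero] at this
    have h2 := ENNReal.tendsto_ofReal h1
    rwa [ENNReal.ofReal_zero] at h2
  have hliminf0 : Filter.liminf (fun n => ∫⁻ s, ENNReal.ofReal (f n s) ∂μ) Filter.atTop = 0 := by
    apply le_antisymm _ zero_le
    calc Filter.liminf (fun n => ∫⁻ s, ENNReal.ofReal (f n s) ∂μ) Filter.atTop
        ≤ Filter.liminf (fun n => ENNReal.ofReal (K * e n)) Filter.atTop :=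
          Filter.liminf_le_liminf (Filter.Eventually.of_forall hupper)
    _ = 0 := htendK.liminf_eq
  have hmeas : ∀ n, Measurable fun s => ENNReal.ofReal (f n s) :=
    fun n => ENNReal.measurable_ofReal.comp (hf_cont n).measurable
  have hFatou := MeasureTheory.lintegral_liminf_le hmeas (μ := μ) (u := Filter.atTop)
  rw [hliminf0] at hFatou
  -- pointwise limit on Ioo a b
  have hpt : ∀ s ∈ Set.Ioo a b,
      Filter.liminf (fun n => ENNReal.ofReal (f n s)) Filter.atTop = ENNReal.ofReal π := by
    intro s hs
    have hbs : 0 < b - s := by linarith [hs.2]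
    have has : a - s < 0 := by linarith [hs.1]
    have hnat : Filter.Tendsto (fun n : ℕ => ((n:ℝ)+1)) Filter.atTop Filter.atTop :=
      Filter.tendsto_atTop_add_const_right _ 1 tendsto_natCast_atTop_atTop
    have he' : ∀ (c : ℝ) (n : ℕ), (c)/(e n) = c * ((n:ℝ)+1) := by
      intro c n
      rw [he]
      simp only []
      field_simp
    have h1 : Filter.Tendsto (fun n : ℕ => (b-s)/(e n)) Filter.atTop Filter.atTop := by
      simp only [he']
      exact hnat.const_mul_atTop hbs
    have h2 : Filter.Tendsto (fun n : ℕ => (a-s)/(e n)) Filter.atTop Filter.atBot := by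
      simp only [he']
      exact hnat.const_mul_atTop_of_neg has
    have h3 : Filter.Tendsto (fun n => Real.arctan ((b-s)/(e n))) Filter.atTop (nhds (π/2)) :=
      (Real.tendsto_arctan_atTop.mono_right nhdsWithin_le_nhds).comp h1
    have h4 : Filter.Tendsto (fun n => Real.arctan ((a-s)/(e n))) Filter.atTop (nhds (-(π/2))) :=
      (Real.tendsto_arctan_atBot.mono_right nhdsWithin_le_nhds).comp h2
    have h5 : Filter.Tendsto (fun n => f n s) Filter.atTop (nhds π) := by
      have h6 := h3.sub h4
      rw [show π/2 - -(π/2) = π by ring] at h6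
      exact h6
    exact (ENNReal.tendsto_ofReal h5).liminf_eq
  have hlower : ENNReal.ofReal π * μ (Set.Ioo a b)
      ≤ ∫⁻ s, Filter.liminf (fun n => ENNReal.ofReal (f n s)) Filter.atTop ∂μ := by
    calc ENNReal.ofReal π * μ (Set.Ioo a b)
        = ∫⁻ _s in Set.Ioo a b, ENNReal.ofReal π ∂μ := (setLIntegral_const _ _).symm
    _ = ∫⁻ s in Set.Ioo a b, Filter.liminf (fun n => ENNReal.ofReal (f n s)) Filter.atTop ∂μ := by
        apply (setLIntegral_congr_fun measurableSet_Ioo ?_).symm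
        exact hpt
    _ ≤ ∫⁻ s, Filter.liminf (fun n => ENNReal.ofReal (f n s)) Filter.atTop ∂μ :=
        setLIntegral_le_lintegral _ _
  have hzero : ENNReal.ofReal π * μ (Set.Ioo a b) = 0 :=
    le_antisymm (hlower.trans hFatou) zero_le
  rcases mul_eq_zero.1 hzero with h | h
  · exfalso
    rw [ENNReal.ofReal_eq_zero] at h
    linarith [Real.pi_pos]
  · exact h

lemma rho_one_of_positive (α ρ : ℝ) (hα : 0 < α) (hα' : α < 1) (hρ : ρ ∈ Set.Icc (0:ℝ) 1)
    (μ : Measure ℝ) [IsProbabilityMeasure μ]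
    (hF : ∀ z : ℂ, 0 < z.im →
      (∫ x : ℝ, (z - (x : ℂ))⁻¹ ∂μ)⁻¹ =
        z + Complex.exp ((π * ρ * α) * Complex.I) * z ^ ((1 : ℂ) - (α : ℂ)))
    (h0 : μ (Set.Iio 0) = 0) : ρ = 1 := by
  by_contra hρ1
  have hρlt : ρ < 1 := lt_of_le_of_ne hρ.2 hρ1
  have hρ0 : 0 ≤ ρ := hρ.1
  have hπ := Real.pi_pos
  set t : ℝ := ρ * α + (1 - α) with ht
  have ht0 : 0 < t := by nlinarith
  have ht1 : t < 1 := by nlinarith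
  set c : ℂ := Complex.exp ((π * ρ * α) * Complex.I) with hc
  set w₀ : ℂ := Complex.exp (((1:ℂ) - (α:ℂ)) * (π * Complex.I)) with hw₀
  set F₀ : ℂ := (-1 : ℂ) + c * w₀ with hF₀
  have hcw : c * w₀ = Complex.exp ((π * ρ * α) * Complex.I + ((1:ℂ) - (α:ℂ)) * (π * Complex.I)) := by
    rw [hc, hw₀, ← Complex.exp_add]
  have hvim : ((π:ℂ) * (ρ:ℂ) * (α:ℂ) * Complex.I + ((1:ℂ) - (α:ℂ)) * ((π:ℂ) * Complex.I)).im
      = π * t := by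
    simp [Complex.add_im, Complex.mul_im]
    ring
  have hvre : ((π:ℂ) * (ρ:ℂ) * (α:ℂ) * Complex.I + ((1:ℂ) - (α:ℂ)) * ((π:ℂ) * Complex.I)).re
      = 0 := by
    simp [Complex.add_re, Complex.mul_re]
  have hF₀im : F₀.im = Real.sin (π * t) := by
    rw [hF₀, Complex.add_im, hcw, Complex.exp_im, hvim, hvre]
    simp
  have hsin : 0 < Real.sin (π * t) := by
    apply Real.sin_pos_of_pos_of_lt_pi (by positivity)
    nlinarith
  have hF₀ne : F₀ ≠ 0 := by
    intro h
    rw [h] at hF₀im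
    simp at hF₀im
    linarith
  -- the path ε ↦ -1 + ε I
  set zf : ℝ → ℂ := fun ε => (-1 : ℂ) + (ε : ℂ) * Complex.I with hzf
  have hzim : ∀ ε : ℝ, (zf ε).im = ε := by intro ε; simp [hzf]
  have hzre : ∀ ε : ℝ, (zf ε).re = -1 := by intro ε; simp [hzf]
  have hzcont : Continuous zf := by fun_prop
  have htz0 : Filter.Tendsto zf (nhdsWithin 0 (Set.Ioi 0)) (nhds (-1 : ℂ)) := by
    have h1 := (hzcont.tendsto 0).mono_left (nhdsWithin_le_nhds (s := Set.Ioi (0:ℝ)))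
    simpa [hzf] using h1
  have htz : Filter.Tendsto zf (nhdsWithin 0 (Set.Ioi 0))
      (nhdsWithin (-1 : ℂ) {z : ℂ | 0 ≤ z.im}) := by
    rw [tendsto_nhdsWithin_iff]
    refine ⟨htz0, ?_⟩
    filter_upwards [eventually_mem_nhdsWithin] with ε hε
    show 0 ≤ (zf ε).im
    rw [hzim]
    exact (le_of_lt hε)
  have hlog : Filter.Tendsto (fun ε => Complex.log (zf ε)) (nhdsWithin 0 (Set.Ioi 0))
      (nhds ((π : ℂ) * Complex.I)) := by
    have hcwa := Complex.continuousWithinAt_log_of_re_neg_of_im_zero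
      (z := (-1 : ℂ)) (by simp) (by simp)
    have := hcwa.tendsto.comp htz
    rwa [Complex.log_neg_one] at this
  have hzne : ∀ᶠ ε in nhdsWithin (0:ℝ) (Set.Ioi 0), zf ε ≠ 0 := by
    refine Filter.Eventually.of_forall fun ε => ?_
    intro h
    have h2 := hzre ε
    rw [h] at h2
    simp at h2
  have hcpow : Filter.Tendsto (fun ε => (zf ε) ^ ((1:ℂ) - (α:ℂ))) (nhdsWithin 0 (Set.Ioi 0))
      (nhds w₀) := by
    have h1 : Filter.Tendsto (fun ε => Complex.exp (((1:ℂ) - (α:ℂ)) * Complex.log (zf ε)))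
        (nhdsWithin 0 (Set.Ioi 0)) (nhds w₀) := by
      rw [hw₀]
      exact (Complex.continuous_exp.tendsto _).comp (hlog.const_mul _)
    apply h1.congr'
    filter_upwards [hzne] with ε hne
    rw [Complex.cpow_def_of_ne_zero hne, mul_comm]
  have hFtend : Filter.Tendsto (fun ε => zf ε + c * (zf ε) ^ ((1:ℂ) - (α:ℂ)))
      (nhdsWithin 0 (Set.Ioi 0)) (nhds F₀) := by
    rw [hF₀]
    exact htz0.add (tendsto_const_nhds.mul hcpow)
  have hGim_tend : Filter.Tendsto (fun ε => ((∫ x : ℝ, (zf ε - (x:ℂ))⁻¹ ∂μ)).im)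
      (nhdsWithin 0 (Set.Ioi 0)) (nhds ((F₀⁻¹).im)) := by
    have h1 : Filter.Tendsto (fun ε => ((zf ε + c * (zf ε) ^ ((1:ℂ) - (α:ℂ)))⁻¹).im)
        (nhdsWithin 0 (Set.Ioi 0)) (nhds ((F₀⁻¹).im)) :=
      (Complex.continuous_im.tendsto _).comp (hFtend.inv₀ hF₀ne)
    apply h1.congr'
    filter_upwards [eventually_mem_nhdsWithin] with ε hε
    have hεpos : (0:ℝ) < ε := hε
    have him : 0 < (zf ε).im := by rw [hzim]; exact hεpos
    have := hF (zf ε) him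
    rw [← this, inv_inv]
  -- squeeze
  have hae : ∀ᵐ s ∂μ, (0:ℝ) ≤ s := by
    rw [ae_iff]
    convert h0 using 2
    ext s
    simp [not_le]
  have hbound : ∀ ε : ℝ, 0 < ε → |(∫ x : ℝ, (zf ε - (x:ℂ))⁻¹ ∂μ).im| ≤ ε := by
    intro ε hε
    have him : 0 < (zf ε).im := by rw [hzim]; exact hε
    have hint := aux_integrable μ him
    have h1 : (∫ x : ℝ, (zf ε - (x:ℂ))⁻¹ ∂μ).im = ∫ x : ℝ, ((zf ε - (x:ℂ))⁻¹).im ∂μ := by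
      rw [show (∫ x : ℝ, (zf ε - (x:ℂ))⁻¹ ∂μ).im
          = RCLike.im (∫ x : ℝ, (zf ε - (x:ℂ))⁻¹ ∂μ) from rfl, ← integral_im hint]
      rfl
    rw [h1]
    have h2 : |∫ x : ℝ, ((zf ε - (x:ℂ))⁻¹).im ∂μ| ≤ ∫ x : ℝ, |((zf ε - (x:ℂ))⁻¹).im| ∂μ := by
      have h2' := norm_integral_le_integral_norm (μ := μ) (fun x : ℝ => ((zf ε - (x:ℂ))⁻¹).im)
      simp only [Real.norm_eq_abs] at h2'
      exact h2'
    refine h2.trans ?_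
    have h3 : ∫ x : ℝ, |((zf ε - (x:ℂ))⁻¹).im| ∂μ ≤ ∫ _x : ℝ, ε ∂μ := by
      apply integral_mono_ae (hint.im.abs) (integrable_const ε)
      filter_upwards [hae] with s hs
      have hne : zf ε - (s:ℂ) ≠ 0 := aux_ne _ him s
      show |((zf ε - (s:ℂ))⁻¹).im| ≤ ε
      rw [Complex.inv_im]
      have hre : (zf ε - (s:ℂ)).re = -1 - s := by rw [Complex.sub_re, hzre]; simp
      have him2 : (zf ε - (s:ℂ)).im = ε := by rw [Complex.sub_im, hzim]; simp
      rw [Complex.normSq_apply, hre, him2]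
      have hd : (1:ℝ) ≤ (-1 - s)*(-1 - s) + ε*ε := by nlinarith
      have hdpos : (0:ℝ) < (-1 - s)*(-1 - s) + ε*ε := by nlinarith
      rw [abs_div, abs_neg, abs_of_pos hε, abs_of_pos hdpos]
      calc ε / ((-1 - s)*(-1 - s) + ε*ε) ≤ ε / 1 := by
            apply div_le_div_of_nonneg_left hε.le one_pos hd
      _ = ε := div_one ε
    refine h3.trans ?_
    simp
  have hsqueeze : Filter.Tendsto (fun ε => ((∫ x : ℝ, (zf ε - (x:ℂ))⁻¹ ∂μ)).im)
      (nhdsWithin 0 (Set.Ioi 0)) (nhds 0) := by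
    apply tendsto_of_tendsto_of_tendsto_of_le_of_le' (g := fun ε : ℝ => -ε) (h := fun ε : ℝ => ε)
    · have : Filter.Tendsto (fun ε : ℝ => ε) (nhdsWithin 0 (Set.Ioi 0)) (nhds 0) :=
        Filter.tendsto_id.mono_left nhdsWithin_le_nhds
      simpa using this.neg
    · exact Filter.tendsto_id.mono_left nhdsWithin_le_nhds
    · filter_upwards [eventually_mem_nhdsWithin] with ε hε
      have := hbound ε hε
      rw [abs_le] at this
      exact this.1
    · filter_upwards [eventually_mem_nhdsWithin] with ε hε
      have := hbound ε hε
      rw [abs_le] at this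
      exact this.2
  have huniq : (F₀⁻¹).im = 0 := tendsto_nhds_unique hGim_tend hsqueeze
  rw [Complex.inv_im, hF₀im] at huniq
  have hnormSq : 0 < Complex.normSq F₀ := Complex.normSq_pos.2 hF₀ne
  rw [div_eq_zero_iff] at huniq
  rcases huniq with h | h
  · rw [neg_eq_zero] at h
    linarith
  · linarith


/-- The Boolean stable law `b_α^ρ` (the probability measure whose reciprocal Cauchy transform is
`F(z) = z - K(z)` with `K(z) = -e^{iπρα} z^{1-α}`, principal branch on `ℂ⁺`) is supported on
`[0,∞)` if and only if `ρ = 1`, for `α ∈ (0,1)` and `ρ ∈ [0,1]`. -/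
theorem boolean_stable_law_positive_iff_rho_eq_one
    (α ρ : ℝ) (hα : 0 < α) (hα' : α < 1) (hρ : ρ ∈ Set.Icc (0 : ℝ) 1)
    (μ : Measure ℝ) [IsProbabilityMeasure μ]
    (hF : ∀ z : ℂ, 0 < z.im →
      (∫ x : ℝ, (z - (x : ℂ))⁻¹ ∂μ)⁻¹ =
        z + Complex.exp ((π * ρ * α) * Complex.I) * z ^ ((1 : ℂ) - (α : ℂ))) :
    μ (Set.Iio 0) = 0 ↔ ρ = 1 := by
  constructor
  · intro h0
    exact rho_one_of_positive α ρ hα hα' hρ μ hF h0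
  · intro hρ1
    subst hρ1
    have hF1 : ∀ z : ℂ, 0 < z.im →
        (∫ x : ℝ, (z - (x : ℂ))⁻¹ ∂μ)⁻¹ =
          z + Complex.exp ((π * α) * Complex.I) * z ^ ((1 : ℂ) - (α : ℂ)) := by
      intro z hz
      rw [hF z hz]
      norm_num
    have hIoo := measure_Ioo_zero α hα hα' μ hF1
    have hsub : Set.Iio (0:ℝ) ⊆ ⋃ n : ℕ, Set.Ioo (-((n:ℝ)+1)) (-(1/((n:ℝ)+1))) := by
      intro x hx
      have hx0 : x < 0 := hx
      obtain ⟨n, hn⟩ := exists_nat_gt (max (-x) (1/(-x)))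
      refine Set.mem_iUnion.2 ⟨n, ?_, ?_⟩
      · have h1 : -x ≤ max (-x) (1/(-x)) := le_max_left _ _
        have := lt_of_le_of_lt h1 hn
        linarith
      · have h2 : 1/(-x) ≤ max (-x) (1/(-x)) := le_max_right _ _
        have h3 : 1/(-x) < (n:ℝ) := lt_of_le_of_lt h2 hn
        have hnx : (0:ℝ) < -x := by linarith
        have h4 : 1/((n:ℝ)+1) < -x := by
          rw [div_lt_iff₀ (by positivity)]
          rw [div_lt_iff₀ hnx] at h3
          nlinarith
        linarith
    refine measure_mono_null hsub (measure_iUnion_null fun n => ?_)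
    rcases lt_or_ge (-((n:ℝ)+1)) (-(1/((n:ℝ)+1))) with h | h
    · refine hIoo _ _ h ?_
      have : (0:ℝ) < 1/((n:ℝ)+1) := by positivity
      linarith
    · rw [Set.Ioo_eq_empty (by exact fun hlt => absurd hlt (not_lt.2 h))]
      exact measure_empty
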